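/- For every n ≥ 1 and every positive integer N, the reduction-modulo-N homomorphism from Sp_{2n}(ℤ) to Sp_{2n}(ℤ/Nℤ) is surjective. -/

import Mathlib

open Matrix

/-- The standard symplectic form matrix `Ω = ((0, 1ₙ), (−1ₙ, 0))`, over any commutative
ring `R`, with rows and columns indexed by `Fin n ⊕ Fin n`. -/
def SpJ (R : Type*) [CommRing R] (n : ℕ) :
    Matrix (Fin n ⊕ Fin n) (Fin n ⊕ Fin n) R :=
  fromBlocks 0 1 (-1) 0

namespace SpAux

variable {R S : Type*} [CommRing R] [CommRing S] {n : ℕ}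

abbrev Idx (n : ℕ) := Fin n ⊕ Fin n

def symp (x y : Idx n → R) : R := x ⬝ᵥ (SpJ R n).mulVec y

lemma symp_eq (x y : Idx n → R) :
    symp x y = (∑ a, x (Sum.inl a) * y (Sum.inr a)) - ∑ a, x (Sum.inr a) * y (Sum.inl a) := by
  simp [symp, dotProduct, mulVec, SpJ, fromBlocks, Fintype.sum_sum_type, one_apply,
    Finset.mul_sum, mul_ite, Finset.sum_ite_eq, Finset.sum_ite_eq', sub_eq_add_neg,
    Finset.sum_neg_distrib]

lemma symp_add_left (x y z : Idx n → R) : symp (x + y) z = symp x z + symp y z := by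
  simp [symp, add_dotProduct]

lemma symp_add_right (x y z : Idx n → R) : symp x (y + z) = symp x y + symp x z := by
  simp [symp, mulVec_add, dotProduct_add]

lemma symp_sub_left (x y z : Idx n → R) : symp (x - y) z = symp x z - symp y z := by
  simp [symp, sub_dotProduct]

lemma symp_sub_right (x y z : Idx n → R) : symp x (y - z) = symp x y - symp x z := by
  simp [symp, mulVec_sub, dotProduct_sub]

lemma symp_self (x : Idx n → R) : symp x x = 0 := by
  rw [symp_eq]
  rw [sub_eq_zero]
  simp [mul_comm]

lemma symp_anti (x y : Idx n → R) : symp x y = - symp y x := by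
  rw [symp_eq, symp_eq, neg_sub]
  congr 1 <;> exact Finset.sum_congr rfl fun a _ => mul_comm _ _

/-- The symplectic transvection `x ↦ x + c * symp x v • v` as a matrix. -/
def sT (v : Idx n → R) (c : R) : Matrix (Idx n) (Idx n) R :=
  1 + c • vecMulVec v ((SpJ R n).mulVec v)

lemma sT_mulVec (v : Idx n → R) (c : R) (x : Idx n → R) :
    (sT v c).mulVec x = x + (c * symp x v) • v := by
  funext i
  simp only [sT, add_mulVec, one_mulVec, smul_mulVec, Pi.add_apply, Pi.smul_apply,
    smul_eq_mul, symp]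
  congr 1
  simp only [mulVec, dotProduct, vecMulVec_apply, Finset.mul_sum, Finset.sum_mul]
  exact Finset.sum_congr rfl fun a _ => Finset.sum_congr rfl fun b _ => by ring

lemma sympJ_mulVec_dot (v x : Idx n → R) :
    ((SpJ R n).mulVec v) ⬝ᵥ x = - symp v x := by
  rw [dotProduct_comm, ← symp, symp_anti]

lemma mul_vecMulVec (M : Matrix (Idx n) (Idx n) R) (a b : Idx n → R) :
    M * vecMulVec a b = vecMulVec (M.mulVec a) b := by
  ext i j
  simp only [mul_apply, vecMulVec_apply, mulVec, dotProduct, Finset.sum_mul]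
  exact Finset.sum_congr rfl fun k _ => by ring

lemma vecMulVec_mul (M : Matrix (Idx n) (Idx n) R) (a b : Idx n → R) :
    vecMulVec a b * M = vecMulVec a (vecMul b M) := by
  ext i j
  simp only [mul_apply, vecMulVec_apply, vecMul, dotProduct, Finset.mul_sum]
  exact Finset.sum_congr rfl fun k _ => by ring

lemma vecMulVec_transpose (a b : Idx n → R) :
    (vecMulVec a b)ᵀ = vecMulVec b a := by
  ext i j
  simp [vecMulVec_apply, mul_comm]

lemma SpJ_transpose : (SpJ R n)ᵀ = - SpJ R n := by
  ext i j
  cases i <;> cases j <;> simp [SpJ, fromBlocks, transpose_apply, one_apply, eq_comm]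

lemma vecMul_SpJ (v : Idx n → R) : vecMul v (SpJ R n) = -((SpJ R n).mulVec v) := by
  rw [← Matrix.mulVec_transpose, SpJ_transpose]
  simp [neg_mulVec]

lemma vecMulVec_mul_vecMulVec (a b c d : Idx n → R) :
    vecMulVec a b * vecMulVec c d = (b ⬝ᵥ c) • vecMulVec a d := by
  ext i j
  simp only [mul_apply, vecMulVec_apply, Matrix.smul_apply, dotProduct, Finset.sum_mul,
    smul_eq_mul]
  exact Finset.sum_congr rfl fun k _ => by ring

lemma sT_symp (v : Idx n → R) (c : R) :
    (sT v c)ᵀ * SpJ R n * sT v c = SpJ R n := by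
  set J := SpJ R n with hJ
  set w := J.mulVec v with hw
  have hB : (vecMulVec v w)ᵀ = vecMulVec w v := vecMulVec_transpose v w
  have hJB : J * vecMulVec v w = vecMulVec w w := by rw [mul_vecMulVec, ← hw]
  have hBJ : vecMulVec w v * J = - vecMulVec w w := by
    rw [vecMulVec_mul, hJ, vecMul_SpJ, ← hJ, ← hw]
    ext i j; simp [vecMulVec_apply]
  have hwv : w ⬝ᵥ v = 0 := by
    rw [hw, hJ, sympJ_mulVec_dot, symp_self, neg_zero]
  have hWB : vecMulVec w w * vecMulVec v w = 0 := by
    rw [vecMulVec_mul_vecMulVec, hwv, zero_smul]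
  simp only [sT]
  rw [← hJ, ← hw]
  simp only [transpose_add, transpose_one, transpose_smul, hB]
  simp only [add_mul, mul_add, one_mul, mul_one, Matrix.smul_mul, Matrix.mul_smul, hBJ, hJB,
    hWB, smul_zero, smul_neg, neg_mul, smul_add]
  abel

lemma sT_mul_neg (v : Idx n → R) (c : R) : sT v c * sT v (-c) = 1 := by
  have hwv : ((SpJ R n).mulVec v) ⬝ᵥ v = 0 := by
    rw [sympJ_mulVec_dot, symp_self, neg_zero]
  have hBB : vecMulVec v ((SpJ R n).mulVec v) * vecMulVec v ((SpJ R n).mulVec v) = 0 := by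
    rw [vecMulVec_mul_vecMulVec, hwv, zero_smul]
  simp only [sT, add_mul, mul_add, one_mul, mul_one, Matrix.smul_mul, Matrix.mul_smul, hBB,
    smul_zero, neg_smul, smul_neg]
  rw [Matrix.mul_neg, Matrix.mul_smul, hBB]
  simp

lemma sT_zero (v : Idx n → R) : sT v 0 = 1 := by
  simp [sT]

/-- symplectic condition -/
def IsSymp (g : Matrix (Idx n) (Idx n) R) : Prop := gᵀ * SpJ R n * g = SpJ R n

lemma dot_mulVec_left (M : Matrix (Idx n) (Idx n) R) (x w : Idx n → R) :
    (M.mulVec x) ⬝ᵥ w = x ⬝ᵥ (Mᵀ.mulVec w) := by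
  simp only [dotProduct, mulVec, transpose_apply, Finset.sum_mul, Finset.mul_sum]
  rw [Finset.sum_comm]
  exact Finset.sum_congr rfl fun a _ => Finset.sum_congr rfl fun b _ => by ring

lemma IsSymp.symp_mulVec {g : Matrix (Idx n) (Idx n) R} (hg : IsSymp g) (x y : Idx n → R) :
    symp (g.mulVec x) (g.mulVec y) = symp x y := by
  unfold symp
  rw [mulVec_mulVec, dot_mulVec_left, mulVec_mulVec, ← Matrix.mul_assoc, hg]

lemma IsSymp.mul {A g : Matrix (Idx n) (Idx n) R} (hA : IsSymp A) (hg : IsSymp g) :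
    IsSymp (A * g) := by
  unfold IsSymp at *
  rw [transpose_mul]
  calc gᵀ * Aᵀ * SpJ R n * (A * g) = gᵀ * (Aᵀ * SpJ R n * A) * g := by
        simp only [Matrix.mul_assoc]
      _ = SpJ R n := by rw [hA]; exact hg

lemma IsSymp.one : IsSymp (1 : Matrix (Idx n) (Idx n) R) := by
  unfold IsSymp; simp

/-- product of a list of transvections -/
def TProd (L : List ((Idx n → R) × R)) : Matrix (Idx n) (Idx n) R :=
  (L.map fun p => sT p.1 p.2).prod

lemma TProd_nil : TProd ([] : List ((Idx n → R) × R)) = 1 := rfl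

lemma TProd_cons (p : (Idx n → R) × R) (L : List ((Idx n → R) × R)) :
    TProd (p :: L) = sT p.1 p.2 * TProd L := by
  simp [TProd]

lemma TProd_append (L₁ L₂ : List ((Idx n → R) × R)) :
    TProd (L₁ ++ L₂) = TProd L₁ * TProd L₂ := by
  simp [TProd]

lemma TProd_isSymp (L : List ((Idx n → R) × R)) : IsSymp (TProd L) := by
  induction L with
  | nil => exact IsSymp.one
  | cons p t ih => rw [TProd_cons]; exact IsSymp.mul (sT_symp p.1 p.2) ih

def LInv (L : List ((Idx n → R) × R)) : List ((Idx n → R) × R) :=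
  (L.map fun p => (p.1, -p.2)).reverse

lemma TProd_LInv_mul (L : List ((Idx n → R) × R)) : TProd (LInv L) * TProd L = 1 := by
  induction L with
  | nil => simp [TProd_nil, LInv]
  | cons p t ih =>
      have : LInv (p :: t) = LInv t ++ [(p.1, -p.2)] := by simp [LInv]
      rw [this, TProd_append, TProd_cons, TProd_cons, TProd_nil, mul_one]
      calc TProd (LInv t) * sT p.1 (-p.2) * (sT p.1 p.2 * TProd t)
          = TProd (LInv t) * (sT p.1 (-p.2) * sT p.1 p.2) * TProd t := by
            simp only [Matrix.mul_assoc]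
        _ = 1 := by
            rw [show sT p.1 (-p.2) * sT p.1 p.2 = 1 by
                have := sT_mul_neg p.1 (-p.2); rwa [neg_neg] at this]
            rw [Matrix.mul_one]; exact ih

/-- `g` is a product of symplectic transvections. -/
def Gen (g : Matrix (Idx n) (Idx n) R) : Prop := ∃ L, TProd L = g

lemma Gen.of_mul_left {A g : Matrix (Idx n) (Idx n) R} (M : List ((Idx n → R) × R))
    (hA : TProd M = A) (h : Gen (A * g)) : Gen g := by
  obtain ⟨L, hL⟩ := h
  refine ⟨LInv M ++ L, ?_⟩
  rw [TProd_append, hL, ← hA, ← Matrix.mul_assoc, TProd_LInv_mul, Matrix.one_mul]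

def ee (i : Fin n) : Idx n → R := Pi.single (Sum.inl i) 1
def ff (i : Fin n) : Idx n → R := Pi.single (Sum.inr i) 1

@[simp] lemma symp_ee_ee (i j : Fin n) : symp (ee i) (ee j : Idx n → R) = 0 := by
  simp [symp_eq, ee, Pi.single_apply]

@[simp] lemma symp_ff_ff (i j : Fin n) : symp (ff i) (ff j : Idx n → R) = 0 := by
  simp [symp_eq, ff, Pi.single_apply]

@[simp] lemma symp_ee_ff (i j : Fin n) :
    symp (ee i) (ff j : Idx n → R) = if i = j then 1 else 0 := by
  simp [symp_eq, ee, ff, Pi.single_apply, eq_comm]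

@[simp] lemma symp_ff_ee (i j : Fin n) :
    symp (ff i) (ee j : Idx n → R) = if i = j then -1 else 0 := by
  rw [symp_anti, symp_ee_ff]
  split <;> simp_all [eq_comm]

lemma fix_of_symp_zero {s w : Idx n → R} (c : R) (h : symp s w = 0) :
    (sT w c).mulVec s = s := by
  rw [sT_mulVec, h, mul_zero, zero_smul, add_zero]

lemma move_single {u v : Idx n → R} (h : IsUnit (symp u v)) :
    ∃ c : R, (sT (v - u) c).mulVec u = v := by
  obtain ⟨cu, hcu⟩ := h
  refine ⟨((cu⁻¹ : Rˣ) : R), ?_⟩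
  rw [sT_mulVec]
  have h2 : symp u (v - u) = symp u v := by rw [symp_sub_right, symp_self, sub_zero]
  rw [h2, ← hcu, Units.inv_mul, one_smul, add_sub_cancel]

lemma move (S : List (Idx n → R)) (u v : Idx n → R)
    (hs : ∀ s ∈ S, symp s u = symp s v)
    (hcase : IsUnit (symp u v) ∨
      ∃ m, IsUnit (symp u m) ∧ IsUnit (symp m v) ∧ ∀ s ∈ S, symp s m = symp s u) :
    ∃ L : List ((Idx n → R) × R), (TProd L).mulVec u = v ∧
      ∀ s ∈ S, (TProd L).mulVec s = s := by
  rcases hcase with h | ⟨m, hum, hmv, hsm⟩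
  · obtain ⟨c, hc⟩ := move_single h
    refine ⟨[(v - u, c)], ?_, ?_⟩
    · rw [TProd_cons, TProd_nil, Matrix.mul_one]; exact hc
    · intro s hsS
      rw [TProd_cons, TProd_nil, Matrix.mul_one]
      exact fix_of_symp_zero c (by rw [symp_sub_right, hs s hsS, sub_self])
  · obtain ⟨c₁, hc₁⟩ := move_single hum
    obtain ⟨c₂, hc₂⟩ := move_single hmv
    refine ⟨[(v - m, c₂), (m - u, c₁)], ?_, ?_⟩
    · rw [TProd_cons, TProd_cons, TProd_nil, Matrix.mul_one, ← Matrix.mulVec_mulVec,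
        hc₁, hc₂]
    · intro s hsS
      rw [TProd_cons, TProd_cons, TProd_nil, Matrix.mul_one, ← Matrix.mulVec_mulVec]
      rw [fix_of_symp_zero c₁ (by rw [symp_sub_right, hsm s hsS, sub_self]),
        fix_of_symp_zero c₂ (by rw [symp_sub_right, hsm s hsS, hs s hsS, sub_self])]

lemma isUnit_add_of_nonunit [IsLocalRing R] {a b : R} (ha : IsUnit a) (hb : ¬IsUnit b) :
    IsUnit (a + b) := by
  by_contra h
  rcases IsLocalRing.isUnit_or_isUnit_of_isUnit_add (a := a + b) (b := -b)
    (by simpa using ha) with h' | h'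
  · exact h h'
  · exact hb (by simpa using h')

lemma mulVec_single_eq (M : Matrix (Idx n) (Idx n) R) (b : Idx n) :
    M *ᵥ (Pi.single b 1) = fun a => M a b := by
  ext a
  simp [mulVec, dotProduct, Pi.single_apply]

lemma eq_one_of_fix (g : Matrix (Idx n) (Idx n) R)
    (h : ∀ i : Fin n, g.mulVec (ee i) = ee i ∧ g.mulVec (ff i) = ff i) : g = 1 := by
  ext a b
  cases b with
  | inl i =>
      have := congrFun ((h i).1) a
      rw [ee, mulVec_single_eq] at this
      simp only at this
      rw [this, Pi.single_apply, one_apply]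
  | inr i =>
      have := congrFun ((h i).2) a
      rw [ff, mulVec_single_eq] at this
      simp only at this
      rw [this, Pi.single_apply, one_apply]

/-- fixed below `m` -/
def FixUpTo (g : Matrix (Idx n) (Idx n) R) (m : ℕ) : Prop :=
  ∀ i : Fin n, (i : ℕ) < m → g.mulVec (ee i) = ee i ∧ g.mulVec (ff i) = ff i

def SList (m : ℕ) : List (Idx n → R) :=
  ((List.finRange n).filter (fun i : Fin n => decide ((i:ℕ) < m))).flatMap (fun i : Fin n => [ee i, ff i])

lemma mem_SList {m : ℕ} {s : Idx n → R} :
    s ∈ SList (n := n) (R := R) m ↔ ∃ i : Fin n, (i:ℕ) < m ∧ (s = ee i ∨ s = ff i) := by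
  simp [SList, List.mem_flatMap, List.mem_filter]

section LocalCase

variable [IsLocalRing R]

lemma gen_of_fixUpTo : ∀ (k m : ℕ), n ≤ m + k →
    ∀ g : Matrix (Idx n) (Idx n) R, IsSymp g → FixUpTo g m → Gen g := by
  intro k
  induction k with
  | zero =>
      intro m hm g hg hfix
      have hg1 : g = 1 :=
        eq_one_of_fix g (fun i => hfix i (lt_of_lt_of_le i.isLt (by simpa using hm)))
      exact ⟨[], by rw [TProd_nil, hg1]⟩
  | succ k ih =>
      intro m hm g hg hfix
      by_cases hnm : n ≤ m + k
      · exact ih m hnm g hg hfix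
      push_neg at hnm
      have hmn : m < n := lt_of_le_of_lt (Nat.le_add_right m k) hnm
      set j : Fin n := ⟨m, hmn⟩ with hj
      have hjm : (j : ℕ) = m := rfl
      have hSfix : ∀ s ∈ SList (n := n) (R := R) m, g.mulVec s = s := by
        intro s hs
        rw [mem_SList] at hs
        obtain ⟨i, hi, h | h⟩ := hs
        · rw [h]; exact (hfix i hi).1
        · rw [h]; exact (hfix i hi).2
      have hSsymp : ∀ s ∈ SList (n := n) (R := R) m, ∀ x, symp s (g *ᵥ x) = symp s x := by
        intro s hs x
        conv_lhs => rw [← hSfix s hs]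
        exact hg.symp_mulVec s x
      have hne : ∀ i : Fin n, (i : ℕ) < m → i ≠ j := by
        intro i hi h
        rw [h] at hi
        exact absurd hi (by omega)
      have hSj : ∀ s ∈ SList (n := n) (R := R) m, symp s (ee j) = 0 ∧ symp s (ff j) = 0 := by
        intro s hs
        rw [mem_SList] at hs
        obtain ⟨i, hi, h | h⟩ := hs <;> rw [h] <;>
          simp [symp_ee_ee, symp_ee_ff, symp_ff_ee, symp_ff_ff, hne i hi]
      set u := g *ᵥ (ee j) with hu
      set p := g *ᵥ (ff j) with hp
      have hup : symp u p = 1 := by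
        rw [hu, hp, hg.symp_mulVec]; simp
      have hsA : ∀ s ∈ SList (n := n) (R := R) m, symp s u = symp s (ee j) := by
        intro s hs; exact hSsymp s hs (ee j)
      have hsu0 : ∀ s ∈ SList (n := n) (R := R) m, symp s u = 0 := by
        intro s hs; rw [hsA s hs]; exact (hSj s hs).1
      have hsp0 : ∀ s ∈ SList (n := n) (R := R) m, symp s p = 0 := by
        intro s hs; rw [hp, hSsymp s hs]; exact (hSj s hs).2
      have hcaseA : IsUnit (symp u (ee j)) ∨
          ∃ mm, IsUnit (symp u mm) ∧ IsUnit (symp mm (ee j)) ∧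
            ∀ s ∈ SList (n := n) (R := R) m, symp s mm = symp s u := by
        right
        by_cases h1 : IsUnit (symp p (ee j : Idx n → R))
        · exact ⟨p, by rw [hup]; exact isUnit_one, h1,
            fun s hs => by rw [hsp0 s hs, hsu0 s hs]⟩
        by_cases h2 : IsUnit (symp u (ff j : Idx n → R))
        · refine ⟨ff j, h2, ?_, fun s hs => by rw [(hSj s hs).2, hsu0 s hs]⟩
          rw [symp_ff_ee]; simp
        · refine ⟨p + ff j, ?_, ?_, fun s hs => by
            rw [symp_add_right, hsp0 s hs, (hSj s hs).2, hsu0 s hs, add_zero]⟩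
          · rw [symp_add_right, hup]
            exact isUnit_add_of_nonunit isUnit_one h2
          · rw [symp_add_left, symp_ff_ee, if_pos rfl, add_comm]
            exact isUnit_add_of_nonunit (IsUnit.neg isUnit_one) h1
      obtain ⟨L₁, hL₁u, hL₁fix⟩ := move (SList m) u (ee j) hsA hcaseA
      set g₁ := TProd L₁ * g with hg₁def
      have hg₁ : IsSymp g₁ := IsSymp.mul (TProd_isSymp L₁) hg
      have hfix₁ : FixUpTo g₁ m := by
        intro i hi
        constructor
        · rw [hg₁def, ← Matrix.mulVec_mulVec, (hfix i hi).1]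
          exact hL₁fix (ee i) (mem_SList.2 ⟨i, hi, Or.inl rfl⟩)
        · rw [hg₁def, ← Matrix.mulVec_mulVec, (hfix i hi).2]
          exact hL₁fix (ff i) (mem_SList.2 ⟨i, hi, Or.inr rfl⟩)
      have hge : g₁ *ᵥ (ee j) = ee j := by
        rw [hg₁def, ← Matrix.mulVec_mulVec, ← hu]
        exact hL₁u
      -- step B
      set u' := g₁ *ᵥ (ff j) with hu'
      have hS'fix : ∀ s ∈ SList (n := n) (R := R) m, g₁ *ᵥ s = s := by
        intro s hs
        rw [mem_SList] at hs
        obtain ⟨i, hi, h | h⟩ := hs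
        · rw [h]; exact (hfix₁ i hi).1
        · rw [h]; exact (hfix₁ i hi).2
      have heu' : symp (ee j) u' = 1 := by
        rw [← hge, hu', hg₁.symp_mulVec]; simp
      have hsu'0 : ∀ s ∈ SList (n := n) (R := R) m, symp s u' = 0 := by
        intro s hs
        conv_lhs => rw [← hS'fix s hs]
        rw [hu', hg₁.symp_mulVec]
        exact (hSj s hs).2
      have hsB : ∀ s ∈ (ee j :: SList (n := n) (R := R) m), symp s u' = symp s (ff j) := by
        intro s hs
        rcases List.mem_cons.1 hs with h | h
        · rw [h, heu', symp_ee_ff, if_pos rfl]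
        · rw [hsu'0 s h, (hSj s h).2]
      have hcaseB : IsUnit (symp u' (ff j)) ∨
          ∃ mm, IsUnit (symp u' mm) ∧ IsUnit (symp mm (ff j)) ∧
            ∀ s ∈ (ee j :: SList (n := n) (R := R) m), symp s mm = symp s u' := by
        by_cases hB : IsUnit (symp u' (ff j : Idx n → R))
        · exact Or.inl hB
        right
        refine ⟨ee j + ff j, ?_, ?_, ?_⟩
        · rw [symp_add_right]
          rw [show symp u' (ee j : Idx n → R) = -1 by rw [symp_anti, heu']]
          exact isUnit_add_of_nonunit (IsUnit.neg isUnit_one) hB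
        · rw [symp_add_left]; simp
        · intro s hs
          rcases List.mem_cons.1 hs with h | h
          · rw [h, symp_add_right, heu']; simp
          · rw [symp_add_right, (hSj s h).1, (hSj s h).2, hsu'0 s h, add_zero]
      obtain ⟨L₂, hL₂u, hL₂fix⟩ := move (ee j :: SList m) u' (ff j) hsB hcaseB
      set g₂ := TProd L₂ * g₁ with hg₂def
      have hg₂ : IsSymp g₂ := IsSymp.mul (TProd_isSymp L₂) hg₁
      have hfix₂ : FixUpTo g₂ (m + 1) := by
        intro i hi
        rcases Nat.lt_succ_iff_lt_or_eq.1 hi with hi' | hi'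
        · constructor
          · rw [hg₂def, ← Matrix.mulVec_mulVec, (hfix₁ i hi').1]
            exact hL₂fix (ee i) (List.mem_cons_of_mem _ (mem_SList.2 ⟨i, hi', Or.inl rfl⟩))
          · rw [hg₂def, ← Matrix.mulVec_mulVec, (hfix₁ i hi').2]
            exact hL₂fix (ff i) (List.mem_cons_of_mem _ (mem_SList.2 ⟨i, hi', Or.inr rfl⟩))
        · have : i = j := Fin.ext (by rw [hjm, hi'])
          rw [this]
          constructor
          · rw [hg₂def, ← Matrix.mulVec_mulVec, hge]
            exact hL₂fix (ee j) List.mem_cons_self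
          · rw [hg₂def, ← Matrix.mulVec_mulVec, ← hu']
            exact hL₂u
      have hgen₂ : Gen g₂ := ih (m + 1) (by omega) g₂ hg₂ hfix₂
      refine Gen.of_mul_left (A := TProd L₂ * TProd L₁) (L₂ ++ L₁) (TProd_append _ _) ?_
      rw [Matrix.mul_assoc]
      exact hgen₂

lemma gen_of_local (g : Matrix (Idx n) (Idx n) R) (hg : IsSymp g) : Gen g :=
  gen_of_fixUpTo n 0 (by omega) g hg (fun i hi => absurd hi (by omega))

end LocalCase

section Map

variable (f : R →+* S)

lemma SpJ_map : (SpJ R n).map f = SpJ S n := by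
  ext a b
  cases a <;> cases b <;>
    simp [SpJ, fromBlocks, Matrix.map_apply, one_apply, apply_ite f]

lemma SpJ_apply_map (a b : Idx n) : f (SpJ R n a b) = SpJ S n a b := by
  have := congrFun (congrFun (SpJ_map (n := n) f) a) b
  simpa [Matrix.map_apply] using this

lemma SpJ_mulVec_map (v : Idx n → R) (a : Idx n) :
    f ((SpJ R n *ᵥ v) a) = (SpJ S n *ᵥ (f ∘ v)) a := by
  simp only [mulVec, dotProduct, map_sum, _root_.map_mul, SpJ_apply_map, Function.comp_apply]

lemma sT_map (v : Idx n → R) (c : R) :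
    (sT v c).map f = sT (f ∘ v) (f c) := by
  ext a b
  simp only [sT, Matrix.map_apply, Matrix.add_apply, Matrix.smul_apply, vecMulVec_apply,
    smul_eq_mul, map_add, _root_.map_mul, Function.comp_apply, SpJ_mulVec_map]
  congr 1
  · simp [one_apply, apply_ite f]

lemma TProd_map (L : List ((Idx n → R) × R)) :
    (TProd L).map f = TProd (L.map fun p => (f ∘ p.1, f p.2)) := by
  induction L with
  | nil => simp [TProd_nil, Matrix.map_one f f.map_zero f.map_one]
  | cons p t ih =>
      rw [TProd_cons, List.map_cons, TProd_cons, Matrix.map_mul, ih, sT_map]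

lemma IsSymp.map {g : Matrix (Idx n) (Idx n) R} (hg : IsSymp g) : IsSymp (g.map f) := by
  unfold IsSymp at *
  rw [← Matrix.transpose_map, ← SpJ_map (n := n) f, ← Matrix.map_mul, ← Matrix.map_mul, hg]

end Map

section Transfer

lemma gen_of_equiv (e : R ≃+* S) (h : ∀ g : Matrix (Idx n) (Idx n) S, IsSymp g → Gen g)
    (g : Matrix (Idx n) (Idx n) R) (hg : IsSymp g) : Gen g := by
  obtain ⟨L, hL⟩ := h (g.map (e : R →+* S)) (hg.map (e : R →+* S))
  refine ⟨L.map (fun p => ((e.symm : S →+* R) ∘ p.1, (e.symm : S →+* R) p.2)), ?_⟩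
  rw [← TProd_map (e.symm : S →+* R), hL, Matrix.map_map]
  have : ((e.symm : S →+* R) : S → R) ∘ ((e : R →+* S) : R → S) = id := by
    funext x; simp
  rw [this, Matrix.map_id]

lemma TProd_replicate_zero (t : ℕ) :
    TProd (List.replicate t (((fun _ => 0), 0) : (Idx n → R) × R)) = 1 := by
  induction t with
  | zero => exact TProd_nil
  | succ t ih => rw [List.replicate_succ, TProd_cons, ih, sT_zero, Matrix.mul_one]

lemma zip_map_fst {A B : Type*} [CommRing A] [CommRing B] :
    ∀ (l₁ : List ((Idx n → A) × A)) (l₂ : List ((Idx n → B) × B)), l₁.length = l₂.length →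
    (List.zipWith (fun p q => ((fun i => (p.1 i, q.1 i) : Idx n → A × B), (p.2, q.2))) l₁ l₂).map
      (fun p => ((RingHom.fst A B : A × B →+* A) ∘ p.1, (RingHom.fst A B) p.2)) = l₁ := by
  intro l₁
  induction l₁ with
  | nil => intro l₂ _; simp
  | cons a t ih =>
      intro l₂ hlen
      cases l₂ with
      | nil => simp at hlen
      | cons b t₂ =>
          simp only [List.zipWith_cons_cons, List.map_cons]
          rw [ih t₂ (by simpa using hlen)]
          rfl

lemma zip_map_snd {A B : Type*} [CommRing A] [CommRing B] :
    ∀ (l₁ : List ((Idx n → A) × A)) (l₂ : List ((Idx n → B) × B)), l₁.length = l₂.length →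
    (List.zipWith (fun p q => ((fun i => (p.1 i, q.1 i) : Idx n → A × B), (p.2, q.2))) l₁ l₂).map
      (fun p => ((RingHom.snd A B : A × B →+* B) ∘ p.1, (RingHom.snd A B) p.2)) = l₂ := by
  intro l₁
  induction l₁ with
  | nil => intro l₂ h; rw [List.length_nil] at h; cases l₂ with
      | nil => simp
      | cons b t₂ => simp at h
  | cons a t ih =>
      intro l₂ hlen
      cases l₂ with
      | nil => simp at hlen
      | cons b t₂ =>
          simp only [List.zipWith_cons_cons, List.map_cons]
          rw [ih t₂ (by simpa using hlen)]
          rfl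

lemma matrix_prod_ext {A B : Type*} [CommRing A] [CommRing B]
    {M M' : Matrix (Idx n) (Idx n) (A × B)}
    (h1 : M.map (RingHom.fst A B) = M'.map (RingHom.fst A B))
    (h2 : M.map (RingHom.snd A B) = M'.map (RingHom.snd A B)) : M = M' := by
  ext i j
  · have e1 := congrFun (congrFun h1 i) j
    simpa [Matrix.map_apply] using e1
  · have e2 := congrFun (congrFun h2 i) j
    simpa [Matrix.map_apply] using e2

lemma gen_prod {A B : Type*} [CommRing A] [CommRing B]
    (hA : ∀ g : Matrix (Idx n) (Idx n) A, IsSymp g → Gen g)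
    (hB : ∀ g : Matrix (Idx n) (Idx n) B, IsSymp g → Gen g)
    (g : Matrix (Idx n) (Idx n) (A × B)) (hg : IsSymp g) : Gen g := by
  obtain ⟨LA, hLA⟩ := hA (g.map (RingHom.fst A B)) (hg.map _)
  obtain ⟨LB, hLB⟩ := hB (g.map (RingHom.snd A B)) (hg.map _)
  set m := max LA.length LB.length with hm
  set LA' := LA ++ List.replicate (m - LA.length) (((fun _ => 0), 0) : (Idx n → A) × A)
    with hLA'
  set LB' := LB ++ List.replicate (m - LB.length) (((fun _ => 0), 0) : (Idx n → B) × B)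
    with hLB'
  have hlenA : LA'.length = m := by
    simp [hLA']; exact Nat.add_sub_of_le (le_max_left _ _)
  have hlenB : LB'.length = m := by
    simp [hLB']; exact Nat.add_sub_of_le (le_max_right _ _)
  have hPA : TProd LA' = g.map (RingHom.fst A B) := by
    rw [hLA', TProd_append, TProd_replicate_zero, Matrix.mul_one, hLA]
  have hPB : TProd LB' = g.map (RingHom.snd A B) := by
    rw [hLB', TProd_append, TProd_replicate_zero, Matrix.mul_one, hLB]
  refine ⟨List.zipWith (fun p q => ((fun i => (p.1 i, q.1 i) : Idx n → A × B), (p.2, q.2)))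
    LA' LB', matrix_prod_ext ?_ ?_⟩
  · rw [TProd_map, zip_map_fst LA' LB' (by rw [hlenA, hlenB]), hPA]
  · rw [TProd_map, zip_map_snd LA' LB' (by rw [hlenA, hlenB]), hPB]

end Transfer

lemma zmod_prime_pow_local (p : ℕ) (hp : p.Prime) (k : ℕ) (hk : 0 < k) :
    IsLocalRing (ZMod (p ^ k)) := by
  have h1 : 1 < p ^ k := Nat.one_lt_pow (by omega) hp.one_lt
  haveI : Fact (1 < p ^ k) := ⟨h1⟩
  haveI : NeZero (p ^ k) := ⟨by positivity⟩
  have hdvd : ∀ b : ZMod (p ^ k), ¬IsUnit b → p ∣ b.val := by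
    intro b hb
    by_contra hpb
    apply hb
    have : (b.val : ZMod (p ^ k)) = b := ZMod.natCast_rightInverse b
    rw [← this, ZMod.isUnit_iff_coprime]
    exact Nat.Coprime.pow_right k ((Nat.Prime.coprime_iff_not_dvd hp).2 hpb).symm
  apply IsLocalRing.of_isUnit_or_isUnit_one_sub_self
  intro a
  by_contra hcon
  push_neg at hcon
  obtain ⟨ha, ha'⟩ := hcon
  have hpa := hdvd a ha
  have hpa' := hdvd (1 - a) ha'
  haveI : NeZero p := ⟨hp.pos.ne'⟩
  have hφ : ∀ b : ZMod (p ^ k), p ∣ b.val → (ZMod.castHom (dvd_pow_self p hk.ne') (ZMod p)) b = 0 := by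
    intro b hb
    rw [ZMod.castHom_apply, ← ZMod.natCast_val]
    exact (ZMod.natCast_eq_zero_iff _ _).2 hb
  have h1' : (ZMod.castHom (dvd_pow_self p hk.ne') (ZMod p)) 1 = 1 := map_one _
  haveI : Fact p.Prime := ⟨hp⟩
  have := hφ a hpa
  have h2 := hφ (1 - a) hpa'
  rw [map_sub, this, sub_zero] at h2
  rw [h2] at h1'
  exact zero_ne_one h1'

lemma gen_zmod : ∀ N : ℕ, 0 < N → ∀ g : Matrix (Idx n) (Idx n) (ZMod N), IsSymp g → Gen g := by
  intro N
  induction N using Nat.strong_induction_on with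
  | _ N ih =>
    intro hN g hg
    rcases eq_or_lt_of_le (show 1 ≤ N from hN) with h1 | h2
    · -- N = 1
      haveI : Subsingleton (ZMod N) := by rw [← h1]; infer_instance
      exact ⟨[], Subsingleton.elim _ _⟩
    · -- N ≥ 2
      set p := N.minFac with hp_def
      have hp : p.Prime := Nat.minFac_prime (by omega)
      set k := N.factorization p with hk_def
      have hk : 0 < k :=
        Nat.Prime.factorization_pos_of_dvd hp (by omega) (Nat.minFac_dvd N)
      set a := p ^ k with ha_def
      set b := N / a with hb_def
      have hab : a * b = N := Nat.ordProj_mul_ordCompl_eq_self N p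
      have hco : Nat.Coprime a b := Nat.Coprime.pow_left k (Nat.coprime_ordCompl hp (by omega))
      have ha_pos : 0 < a := Nat.pow_pos hp.pos
      have hb_pos : 0 < b := by
        rcases Nat.eq_zero_or_pos b with h | h
        · rw [h, mul_zero] at hab; omega
        · exact h
      rcases eq_or_lt_of_le (show 1 ≤ b from hb_pos) with hb1 | hb2
      · -- b = 1, N = p ^ k
        have hb1' : b = 1 := by omega
        have hNa : N = p ^ k := by rw [← hab, hb1', mul_one]
        haveI : IsLocalRing (ZMod N) := by rw [hNa]; exact zmod_prime_pow_local p hp k hk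
        exact gen_of_local g hg
      · have ha2 : 1 < a := by
          have := hp.one_lt
          calc 1 < p := this
            _ ≤ p ^ k := Nat.le_self_pow hk.ne' p
        have haN : a < N := by
          rw [← hab]
          exact lt_mul_of_one_lt_right ha_pos hb2
        have hbN : b < N := by
          rw [← hab]
          exact lt_mul_of_one_lt_left hb_pos ha2
        have e : ZMod N ≃+* ZMod a × ZMod b := by
          have e0 := ZMod.chineseRemainder hco
          rw [hab] at e0
          exact e0
        exact gen_of_equiv e
          (fun g' hg' => gen_prod (fun gA hgA => ih a haN ha_pos gA hgA)
            (fun gB hgB => ih b hbN hb_pos gB hgB) g' hg') g hg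

end SpAux

/-- For every `n ≥ 1` and every positive integer `N`, the reduction-modulo-`N`
homomorphism from `Sp_{2n}(ℤ)` to `Sp_{2n}(ℤ/Nℤ)` is surjective. -/
theorem sp_reduction_mod_N_surjective (n N : ℕ) (hn : 1 ≤ n) (hN : 0 < N)
    (g : Matrix (Fin n ⊕ Fin n) (Fin n ⊕ Fin n) (ZMod N))
    (hg : gᵀ * SpJ (ZMod N) n * g = SpJ (ZMod N) n) :
    ∃ G : Matrix (Fin n ⊕ Fin n) (Fin n ⊕ Fin n) ℤ,
      Gᵀ * SpJ ℤ n * G = SpJ ℤ n ∧ G.map (Int.cast : ℤ → ZMod N) = g := by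
  haveI : NeZero N := ⟨hN.ne'⟩
  obtain ⟨L, hL⟩ := SpAux.gen_zmod N hN g hg
  set Lz : List ((SpAux.Idx n → ℤ) × ℤ) :=
    L.map fun p => ((fun i => ((p.1 i).val : ℤ)), ((p.2).val : ℤ)) with hLz
  refine ⟨SpAux.TProd Lz, SpAux.TProd_isSymp Lz, ?_⟩
  have hcast : ∀ x : ZMod N, (((x.val : ℤ) : ZMod N)) = x := by
    intro x
    push_cast
    exact ZMod.natCast_rightInverse x
  have h1 : (SpAux.TProd Lz).map (Int.cast : ℤ → ZMod N)
      = (SpAux.TProd Lz).map (Int.castRingHom (ZMod N)) := rfl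
  rw [h1, SpAux.TProd_map, hLz, List.map_map, ← hL]
  congr 1
  have : ∀ p ∈ L, ((fun q => ((Int.castRingHom (ZMod N) : ℤ →+* ZMod N) ∘ q.1,
      (Int.castRingHom (ZMod N)) q.2)) ∘
      (fun q => ((fun i => (((q.1 i).val : ℤ))), ((q.2).val : ℤ)))) p = p := by
    intro p _
    refine Prod.ext ?_ ?_
    · funext i
      simp only [Function.comp_apply]
      exact hcast (p.1 i)
    · simp only [Function.comp_apply]
      exact hcast p.2
  rw [List.map_congr_left this]
  simp
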